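/- Let l ≥ 1 and let f : [-l, l] → ℝ be Lipschitz continuous with |f(s)| + |f'(s)| ≤ K e^{-k|s|} for s ∈ (-l, l), for some constants K, k > 0. Then there is a constant C₂ > 0, depending only on K and k (independent of l ≥ 1), such that ‖f‖_{L^∞(-l,l)} ≤ C₂ ‖f‖_{L²(-l,l)}^{2/3}. -/

import Mathlib

open MeasureTheory intervalIntegral Set Filter Topology

-- FTC-type increment bound for Lipschitz functions with a.e. bounded derivative
lemma ftc_lip {g : ℝ → ℝ} {L : NNReal} (hg : LipschitzWith L g) {K' : ℝ} (hK' : 0 ≤ K')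
    {a b : ℝ} (hab : a ≤ b) (hd : ∀ x ∈ Set.Ioo a b, |deriv g x| ≤ K') :
    |g b - g a| ≤ K' * (b - a) := by
  have hcont : Continuous g := hg.continuous
  set δ : ℕ → ℝ := fun n => 1 / (n + 1) with hδ
  have hδpos : ∀ n, 0 < δ n := fun n => by positivity
  have hδ0 : Tendsto δ atTop (𝓝 0) := tendsto_one_div_add_atTop_nhds_zero_nat
  set F : ℕ → ℝ → ℝ := fun n x => (g (x + δ n) - g x) / δ n with hF
  -- slope convergence helper
  have slope_tendsto : ∀ (G : ℝ → ℝ) (c d : ℝ), HasDerivAt G d c →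
      Tendsto (fun n => (G (c + δ n) - G c) / δ n) atTop (𝓝 d) := by
    intro G c d hG
    have h1 : Tendsto (fun n => c + δ n) atTop (𝓝[≠] c) := by
      refine tendsto_nhdsWithin_of_tendsto_nhds_of_eventually_within _ ?_ ?_
      · simpa using tendsto_const_nhds.add hδ0
      · exact Eventually.of_forall fun n => by
          simp [mem_compl_singleton_iff]; positivity
    have h2 := (hasDerivAt_iff_tendsto_slope.1 hG).comp h1
    refine h2.congr fun n => ?_
    simp [slope_def_field, div_eq_iff (hδpos n).ne', Function.comp]
  -- Step 1: value of ∫ F n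
  have step1 : ∀ n, ∫ x in a..b, F n x
      = (∫ x in b..(b + δ n), g x) / δ n - (∫ x in a..(a + δ n), g x) / δ n := by
    intro n
    have hi : ∀ u v : ℝ, IntervalIntegrable g volume u v := fun u v =>
      hcont.intervalIntegrable u v
    have e1 : ∫ x in a..b, F n x = (∫ x in a..b, (g (x + δ n) - g x)) / δ n := by
      rw [← intervalIntegral.integral_div]
    have e2 : ∫ x in a..b, (g (x + δ n) - g x)
        = (∫ x in a..b, g (x + δ n)) - ∫ x in a..b, g x :=
      intervalIntegral.integral_sub ((hcont.comp (by continuity)).intervalIntegrable _ _) (hi a b)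
    have e3 : ∫ x in a..b, g (x + δ n) = ∫ x in (a + δ n)..(b + δ n), g x :=
      intervalIntegral.integral_comp_add_right g (δ n)
    have h1 : (∫ x in a..(a + δ n), g x) + ∫ x in (a + δ n)..(b + δ n), g x
        = ∫ x in a..(b + δ n), g x := integral_add_adjacent_intervals (hi _ _) (hi _ _)
    have h2 : (∫ x in a..b, g x) + ∫ x in b..(b + δ n), g x
        = ∫ x in a..(b + δ n), g x := integral_add_adjacent_intervals (hi _ _) (hi _ _)
    rw [e1, e2, e3]
    rw [div_sub_div_same]
    congr 1
    linarith
  -- Step 2: boundary convergence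
  have step2 : ∀ c : ℝ, Tendsto (fun n => (∫ x in c..(c + δ n), g x) / δ n) atTop (𝓝 (g c)) := by
    intro c
    have hG : HasDerivAt (fun u => ∫ x in c..u, g x) (g c) c :=
      (hcont.integral_hasStrictDerivAt c c).hasDerivAt
    have := slope_tendsto _ c (g c) hG
    simpa using this
  -- hence ∫ F n → g b - g a
  have lim1 : Tendsto (fun n => ∫ x in a..b, F n x) atTop (𝓝 (g b - g a)) := by
    have := (step2 b).sub (step2 a)
    refine this.congr fun n => (step1 n).symm
  -- Step 3: dominated convergence
  have meas : ∀ n, AEStronglyMeasurable (F n) (volume.restrict (Ioc a b)) := by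
    intro n
    exact ((hcont.comp (by continuity)).sub hcont).div_const _
      |>.aestronglyMeasurable.restrict
  have hbound : ∀ n, ∀ᵐ x ∂(volume.restrict (Ioc a b)), ‖F n x‖ ≤ (L : ℝ) := by
    intro n
    refine Eventually.of_forall fun x => ?_
    have := hg.dist_le_mul (x + δ n) x
    rw [Real.dist_eq, Real.dist_eq] at this
    have hxx : |x + δ n - x| = δ n := by
      rw [add_sub_cancel_left, abs_of_pos (hδpos n)]
    rw [hxx] at this
    rw [Real.norm_eq_abs, hF, abs_div, abs_of_pos (hδpos n)]
    rw [div_le_iff₀ (hδpos n)]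
    linarith
  have hlim : ∀ᵐ x ∂(volume.restrict (Ioc a b)),
      Tendsto (fun n => F n x) atTop (𝓝 (deriv g x)) := by
    have hae : ∀ᵐ x : ℝ, DifferentiableAt ℝ g x := hg.ae_differentiableAt
    refine ae_restrict_of_ae (hae.mono fun x hx => ?_)
    exact slope_tendsto g x (deriv g x) hx.hasDerivAt
  have bint : Integrable (fun _ : ℝ => (L : ℝ)) (volume.restrict (Ioc a b)) :=
    integrable_const _
  have lim2 : Tendsto (fun n => ∫ x in Ioc a b, F n x) atTop
      (𝓝 (∫ x in Ioc a b, deriv g x)) :=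
    tendsto_integral_of_dominated_convergence _ meas bint hbound hlim
  have lim1' : Tendsto (fun n => ∫ x in Ioc a b, F n x) atTop (𝓝 (g b - g a)) := by
    refine lim1.congr fun n => ?_
    rw [intervalIntegral.integral_of_le hab]
  have key : g b - g a = ∫ x in Ioc a b, deriv g x := tendsto_nhds_unique lim1' lim2
  rw [key, integral_Ioc_eq_integral_Ioo]
  have hb : ∀ᵐ x ∂(volume.restrict (Ioo a b)), ‖deriv g x‖ ≤ K' := by
    filter_upwards [ae_restrict_mem measurableSet_Ioo] with x hx
    simpa [Real.norm_eq_abs] using hd x hx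
  calc |∫ x in Ioo a b, deriv g x| = ‖∫ x in Ioo a b, deriv g x‖ := (Real.norm_eq_abs _).symm
    _ ≤ K' * (volume (Ioo a b)).toReal := by
        exact norm_setIntegral_le_of_norm_le_const_ae (by simp [Real.volume_Ioo]) hb
    _ = K' * (b - a) := by rw [Real.volume_Ioo, ENNReal.toReal_ofReal (by linarith)]

theorem stmt4 (K k : ℝ) (hK : 0 < K) (hk : 0 < k) :
    ∃ C₂ > (0:ℝ), ∀ l : ℝ, 1 ≤ l → ∀ f : ℝ → ℝ,
      (∃ L : NNReal, LipschitzOnWith L f (Set.Icc (-l) l)) →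
      (∀ s ∈ Set.Ioo (-l) l, |f s| + |deriv f s| ≤ K * Real.exp (-k * |s|)) →
      ∀ s ∈ Set.Icc (-l) l,
        |f s| ≤ C₂ * (∫ t in (-l)..l, (f t) ^ 2) ^ ((1:ℝ)/3) := by
  refine ⟨(8*K)^((1:ℝ)/3), by positivity, ?_⟩
  rintro l hl f ⟨L, hL⟩ hbd s hs
  obtain ⟨g, hg, hEq⟩ := hL.extend_real
  have hll : -l ≤ l := by linarith
  -- pointwise bound K e^{-k|x|} ≤ K
  have hKe : ∀ x : ℝ, K * Real.exp (-k * |x|) ≤ K := by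
    intro x
    have h1 : Real.exp (-k * |x|) ≤ 1 := by
      rw [Real.exp_le_one_iff]
      have := abs_nonneg x
      nlinarith
    nlinarith
  -- interior bound on |f|
  have hfi : ∀ x ∈ Ioo (-l) l, |f x| ≤ K := by
    intro x hx
    have := hbd x hx
    have := abs_nonneg (deriv f x)
    have := hKe x
    linarith
  -- increment bound
  have hstep : ∀ a b : ℝ, -l ≤ a → a ≤ b → b ≤ l → |f b - f a| ≤ K * (b - a) := by
    intro a b ha hab hb
    have h1 : ∀ x ∈ Ioo a b, |deriv g x| ≤ K := by
      intro x hx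
      have hx' : x ∈ Ioo (-l) l := ⟨lt_of_le_of_lt ha hx.1, lt_of_lt_of_le hx.2 hb⟩
      have heq : f =ᶠ[𝓝 x] g := by
        filter_upwards [isOpen_Ioo.mem_nhds hx'] with y hy
        exact hEq (Ioo_subset_Icc_self hy)
      rw [← heq.deriv_eq]
      have := hbd x hx'
      have := abs_nonneg (f x)
      have := hKe x
      linarith
    have h2 := ftc_lip hg hK.le hab h1
    rwa [← hEq ⟨le_trans ha hab, hb⟩, ← hEq ⟨ha, le_trans hab hb⟩] at h2
  -- |f s| ≤ K
  have hfK : |f s| ≤ K := by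
    refine le_of_forall_pos_le_add fun ε hε => ?_
    set η := min (ε/K) (l/2) with hη
    have hη0 : 0 < η := lt_min (by positivity) (by linarith)
    have hηl : η ≤ l/2 := min_le_right _ _
    have hηε : K * η ≤ ε := by
      calc K * η ≤ K * (ε/K) := by
            exact mul_le_mul_of_nonneg_left (min_le_left _ _) hK.le
        _ = ε := by field_simp
    by_cases hss : s ≤ 0
    · have ht : s + η ∈ Ioo (-l) l := by
        constructor
        · have := hs.1; linarith
        · have : s + η ≤ l/2 := by linarith
          linarith
      have h1 := hstep s (s + η) hs.1 (by linarith) ht.2.le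
      have h2 := hfi _ ht
      have := abs_sub_abs_le_abs_sub (f s) (f (s + η))
      rw [abs_sub_comm] at this
      have hsimp : s + η - s = η := by ring
      rw [hsimp] at h1
      linarith
    · push_neg at hss
      have ht : s - η ∈ Ioo (-l) l := by
        constructor
        · have : -(l/2) ≤ s - η := by linarith
          linarith
        · have := hs.2; linarith
      have h1 := hstep (s - η) s ht.1.le (by linarith) hs.2
      have h2 := hfi _ ht
      have := abs_sub_abs_le_abs_sub (f s) (f (s - η))
      have hsimp : s - (s - η) = η := by ring
      rw [hsimp] at h1
      linarith
  -- integral nonneg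
  have hI0 : 0 ≤ ∫ t in (-l)..l, (f t)^2 :=
    intervalIntegral.integral_nonneg hll fun u _ => sq_nonneg _
  set M := |f s| with hM
  rcases eq_or_lt_of_le (abs_nonneg (f s)) with h0 | h0
  · rw [hM, ← h0]
    positivity
  -- main case
  set r := M / (2*K) with hr
  have hrpos : 0 < r := by positivity
  have hr1 : r ≤ 1/2 := by
    rw [hr, div_le_iff₀ (by positivity)]
    linarith
  -- the interval [a, a+r]
  set a := if s ≤ 0 then s else s - r with ha
  have hal : -l ≤ a := by
    rw [ha]; split_ifs with h
    · exact hs.1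
    · push_neg at h; nlinarith
  have hbl : a + r ≤ l := by
    rw [ha]; split_ifs with h
    · nlinarith
    · have := hs.2; linarith
  have hsab : a ≤ s ∧ s ≤ a + r := by
    rw [ha]; split_ifs with h
    · exact ⟨le_refl s, by linarith⟩
    · exact ⟨by linarith, by linarith⟩
  -- lower bound for |f t| on [a, a+r]
  have hlow : ∀ t ∈ Icc a (a + r), M/2 ≤ |f t| := by
    intro t ht
    have h1 : |f t - f s| ≤ K * r := by
      rcases le_total s t with h | h
      · have := hstep s t (le_trans hal hsab.1) h (le_trans ht.2 hbl)
        calc |f t - f s| ≤ K * (t - s) := this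
          _ ≤ K * r := by
              have : t - s ≤ r := by
                have := ht.2; have := hsab.1; linarith
              nlinarith
      · have := hstep t s (le_trans hal ht.1) h (le_trans (le_trans hsab.2 (le_refl _)) hbl)
        rw [abs_sub_comm]
        calc |f s - f t| ≤ K * (s - t) := this
          _ ≤ K * r := by
              have : s - t ≤ r := by
                have := ht.1; have := hsab.2; linarith
              nlinarith
    have hKr : K * r = M / 2 := by
      rw [hr]; field_simp
    have h2 := abs_sub_abs_le_abs_sub (f s) (f t)
    rw [abs_sub_comm] at h1
    linarith [hM.le, hM.ge]
  -- integral comparisons; switch to g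
  have hIcongr : (∫ t in (-l)..l, (f t)^2) = ∫ t in (-l)..l, (g t)^2 := by
    refine intervalIntegral.integral_congr fun x hx => ?_
    rw [uIcc_of_le hll] at hx
    rw [hEq hx]
  have hgi : ∀ u v : ℝ, IntervalIntegrable (fun t => (g t)^2) volume u v := fun u v =>
    ((hg.continuous.pow 2)).intervalIntegrable u v
  have hJ : (∫ t in a..(a+r), (g t)^2) ≤ ∫ t in (-l)..l, (g t)^2 := by
    apply intervalIntegral.integral_mono_interval hal (by linarith) hbl
    · exact Eventually.of_forall fun x => sq_nonneg _
    · exact hgi _ _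
  have hconst : (M/2)^2 * r ≤ ∫ t in a..(a+r), (g t)^2 := by
    have hc : (∫ t in a..(a+r), (M/2)^2) = (M/2)^2 * r := by
      simp [mul_comm]
    rw [← hc]
    apply intervalIntegral.integral_mono_on (by linarith) (intervalIntegrable_const) (hgi _ _)
    intro t ht
    have htl : t ∈ Icc (-l) l := ⟨le_trans hal ht.1, le_trans ht.2 hbl⟩
    have h1 := hlow t ht
    rw [hEq htl] at h1
    calc (M/2)^2 ≤ |g t|^2 := by
          apply pow_le_pow_left₀ (by positivity) h1
      _ = (g t)^2 := sq_abs _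
  have hfin : M^(3:ℕ) ≤ 8*K*(∫ t in (-l)..l, (f t)^2) := by
    rw [hIcongr]
    have : (M/2)^2 * r = M^3 / (8*K) := by
      rw [hr]; field_simp; ring
    have h5 : M^3/(8*K) ≤ ∫ t in (-l)..l, (g t)^2 := by
      rw [← this]; exact le_trans hconst hJ
    rw [div_le_iff₀ (by positivity)] at h5
    push_cast
    linarith
  calc M = (M^(3:ℕ)) ^ ((1:ℝ)/3) := by
        rw [← Real.rpow_natCast M 3, ← Real.rpow_mul (abs_nonneg _)]
        norm_num
        rfl
    _ ≤ (8*K*(∫ t in (-l)..l, (f t)^2)) ^ ((1:ℝ)/3) := by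
        apply Real.rpow_le_rpow (by positivity) hfin (by norm_num)
    _ = (8*K)^((1:ℝ)/3) * (∫ t in (-l)..l, (f t)^2) ^ ((1:ℝ)/3) :=
        Real.mul_rpow (by positivity) hI0
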